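/- Let N ≥ 1, n ≥ 1, and η > 0. Let Z₁, …, Zₙ be independent identically distributed random variables taking values in Fin N, with pᵢ = P(Z₁ = i) for each i. For each i let N̂ᵢ = #{j ∈ {1,…,n} : Zⱼ = i} be the empirical count. Then P( ∑_{i=1}^{N} | N̂ᵢ/n − pᵢ | ≥ η ) ≤ 2^N · exp(−n·η²/2). -/

import Mathlib

set_option maxRecDepth 100000

open MeasureTheory Real ProbabilityTheory


lemma bern_denom_pos {p : ℝ} (hp0 : 0 ≤ p) (hp1 : p ≤ 1) (t : ℝ) :
    0 < 1 - p + p * Real.exp t := by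
  rcases le_or_gt (Real.exp t) 1 with h | h
  · nlinarith [Real.exp_pos t, mul_nonneg (sub_nonneg.2 hp1) (sub_nonneg.2 h)]
  · nlinarith [mul_le_mul_of_nonneg_left h.le hp0]

lemma hasDerivAt_D (p t : ℝ) :
    HasDerivAt (fun t => 1 - p + p * Real.exp t) (p * Real.exp t) t :=
  ((Real.hasDerivAt_exp t).const_mul p).const_add (1 - p)

lemma hoeffding_log_bound {p : ℝ} (hp0 : 0 ≤ p) (hp1 : p ≤ 1) {t : ℝ} (ht : 0 ≤ t) :
    Real.log (1 - p + p * Real.exp t) ≤ p * t + t ^ 2 / 8 := by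
  set h : ℝ → ℝ := fun t => p + t / 4 - p * Real.exp t / (1 - p + p * Real.exp t) with hh
  set g : ℝ → ℝ := fun t => p * t + t ^ 2 / 8 - Real.log (1 - p + p * Real.exp t) with hg
  have hD := fun t => bern_denom_pos hp0 hp1 t
  have hgd : ∀ x : ℝ, HasDerivAt g (h x) x := by
    intro x
    have h1 : HasDerivAt (fun t : ℝ => p * t) p x := by
      simpa using (hasDerivAt_id x).const_mul p
    have h2 : HasDerivAt (fun t : ℝ => t ^ 2 / 8) (x / 4) x := by
      have := (hasDerivAt_pow 2 x).div_const 8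
      refine this.congr_deriv ?_
      ring
    have h3 : HasDerivAt (fun t : ℝ => Real.log (1 - p + p * Real.exp t))
        (p * Real.exp x / (1 - p + p * Real.exp x)) x :=
      (hasDerivAt_D p x).log (hD x).ne'
    exact (h1.add h2).sub h3
  have hhd : ∀ x : ℝ, HasDerivAt h
      (1 / 4 - p * Real.exp x * (1 - p) / (1 - p + p * Real.exp x) ^ 2) x := by
    intro x
    have hq : HasDerivAt (fun t : ℝ => p * Real.exp t / (1 - p + p * Real.exp t))
        ((p * Real.exp x * (1 - p + p * Real.exp x) - p * Real.exp x * (p * Real.exp x))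
          / (1 - p + p * Real.exp x) ^ 2) x :=
      ((Real.hasDerivAt_exp x).const_mul p).div (hasDerivAt_D p x) (hD x).ne'
    have h2 : HasDerivAt (fun t : ℝ => p + t / 4) (1 / 4) x := by
      simpa using ((hasDerivAt_id x).div_const 4).const_add p
    have := h2.sub hq
    refine this.congr_deriv ?_
    have hnum : p * Real.exp x * (1 - p + p * Real.exp x) - p * Real.exp x * (p * Real.exp x)
        = p * Real.exp x * (1 - p) := by ring
    rw [hnum]
  have hhderiv_nonneg : ∀ x : ℝ, 0 ≤ 1 / 4 - p * Real.exp x * (1 - p) / (1 - p + p * Real.exp x) ^ 2 := by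
    intro x
    have hDx := hD x
    rw [sub_nonneg, div_le_iff₀ (by positivity)]
    nlinarith [sq_nonneg (p * Real.exp x - (1 - p))]
  have hmono : MonotoneOn h (Set.Ici (0 : ℝ)) := by
    apply monotoneOn_of_deriv_nonneg (convex_Ici 0)
    · exact fun x _ => ((hhd x).differentiableAt).continuousAt.continuousWithinAt
    · exact fun x _ => ((hhd x).differentiableAt).differentiableWithinAt
    · intro x _
      rw [(hhd x).deriv]
      exact hhderiv_nonneg x
  have hh0 : h 0 = 0 := by simp [hh]
  have hhnn : ∀ x ∈ Set.Ici (0 : ℝ), 0 ≤ h x := by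
    intro x hx
    have := hmono (Set.self_mem_Ici) hx hx
    rw [hh0] at this
    exact this
  have hgmono : MonotoneOn g (Set.Ici (0 : ℝ)) := by
    apply monotoneOn_of_deriv_nonneg (convex_Ici 0)
    · exact fun x _ => ((hgd x).differentiableAt).continuousAt.continuousWithinAt
    · exact fun x _ => ((hgd x).differentiableAt).differentiableWithinAt
    · intro x hx
      rw [(hgd x).deriv]
      exact hhnn x (le_of_lt (by simpa using hx))
  have hg0 : g 0 = 0 := by simp [hg]
  have := hgmono (Set.self_mem_Ici) ht ht
  rw [hg0] at this
  have : 0 ≤ p * t + t ^ 2 / 8 - Real.log (1 - p + p * Real.exp t) := this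
  linarith

lemma bern_mgf_bound {p : ℝ} (hp0 : 0 ≤ p) (hp1 : p ≤ 1) {t : ℝ} (ht : 0 ≤ t) :
    p * Real.exp (t * (1 - p)) + (1 - p) * Real.exp (t * (0 - p)) ≤ Real.exp (t ^ 2 / 8) := by
  have hD := bern_denom_pos hp0 hp1 t
  have hlog := hoeffding_log_bound hp0 hp1 ht
  have hDle : 1 - p + p * Real.exp t ≤ Real.exp (p * t + t ^ 2 / 8) :=
    (Real.log_le_iff_le_exp hD).mp hlog
  have key : p * Real.exp (t * (1 - p)) + (1 - p) * Real.exp (t * (0 - p))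
      = Real.exp (-(t * p)) * (1 - p + p * Real.exp t) := by
    rw [mul_add]
    rw [show t * (1 - p) = -(t * p) + t by ring, Real.exp_add,
        show t * (0 - p) = -(t * p) by ring]
    ring
  rw [key]
  calc Real.exp (-(t * p)) * (1 - p + p * Real.exp t)
      ≤ Real.exp (-(t * p)) * Real.exp (p * t + t ^ 2 / 8) := by
        exact mul_le_mul_of_nonneg_left hDle (Real.exp_pos _).le
    _ = Real.exp (t ^ 2 / 8) := by rw [← Real.exp_add]; ring_nf

lemma sum_singleton_toReal {N : ℕ} (μ : Measure (Fin N)) [IsProbabilityMeasure μ] :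
    ∑ i : Fin N, (μ {i}).toReal = 1 := by
  have h : ∑ i : Fin N, μ {i} = μ Set.univ := by
    rw [show (Set.univ : Set (Fin N)) = ⋃ i ∈ (Finset.univ : Finset (Fin N)), {i} by ext x; simp]
    rw [measure_biUnion_finset]
    · intro i _ j _ hij
      simp [Function.onFun, Set.disjoint_singleton, hij]
    · exact fun i _ => measurableSet_singleton i
  rw [← ENNReal.toReal_sum (fun i _ => measure_ne_top μ _)] at *
  rw [h, measure_univ, ENNReal.toReal_one]

lemma chernoff_one (N n : ℕ) (μ : Measure (Fin N)) [IsProbabilityMeasure μ]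
    (A : Finset (Fin N)) (η : ℝ) (hη : 0 < η) :
    (Measure.pi fun _ : Fin n => μ)
      {ω : Fin n → Fin N | (n : ℝ) * η / 2 ≤ ∑ j : Fin n,
        ((if ω j ∈ A then (1 : ℝ) else 0) - ∑ i ∈ A, (μ {i}).toReal)} ≤
      ENNReal.ofReal (Real.exp (-((n : ℝ) * η ^ 2) / 2)) := by
  set p : ℝ := ∑ i ∈ A, (μ {i}).toReal with hp
  have hp0 : 0 ≤ p := Finset.sum_nonneg fun i _ => ENNReal.toReal_nonneg
  have hp1 : p ≤ 1 := by
    rw [← sum_singleton_toReal μ]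
    exact Finset.sum_le_sum_of_subset_of_nonneg (Finset.subset_univ A)
      (fun i _ _ => ENNReal.toReal_nonneg)
  set P : Measure (Fin n → Fin N) := Measure.pi fun _ : Fin n => μ with hP
  haveI : IsProbabilityMeasure P := by rw [hP]; infer_instance
  set X : (Fin n → Fin N) → ℝ :=
    fun ω => ∑ j : Fin n, ((if ω j ∈ A then (1 : ℝ) else 0) - p) with hX
  set t : ℝ := 2 * η with htdef
  have ht : 0 ≤ t := by positivity
  -- single-coordinate integral
  have hsingle : ∫ x : Fin N, Real.exp (t * ((if x ∈ A then (1:ℝ) else 0) - p)) ∂μ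
      = p * Real.exp (t * (1 - p)) + (1 - p) * Real.exp (t * (0 - p)) := by
    rw [integral_fintype (Integrable.of_finite)]
    simp only [smul_eq_mul, Measure.real]
    rw [← Finset.sum_add_sum_compl A]
    congr 1
    · rw [Finset.sum_congr rfl (fun i hi => by rw [if_pos hi]), ← Finset.sum_mul]
    · rw [Finset.sum_congr rfl (fun i hi => by
        rw [if_neg (Finset.mem_compl.mp hi)]), ← Finset.sum_mul]
      congr 1
      have := Finset.sum_add_sum_compl A (fun i => (μ {i}).toReal)
      rw [sum_singleton_toReal μ] at this
      linarith
  have hsingle_bound : ∫ x : Fin N, Real.exp (t * ((if x ∈ A then (1:ℝ) else 0) - p)) ∂μ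
      ≤ Real.exp (t ^ 2 / 8) := by
    rw [hsingle]; exact bern_mgf_bound hp0 hp1 ht
  have hsingle_nonneg : 0 ≤ ∫ x : Fin N, Real.exp (t * ((if x ∈ A then (1:ℝ) else 0) - p)) ∂μ :=
    integral_nonneg fun x => (Real.exp_pos _).le
  -- mgf product formula
  have hmgf : mgf X P t
      = (∫ x : Fin N, Real.exp (t * ((if x ∈ A then (1:ℝ) else 0) - p)) ∂μ) ^ n := by
    letI : MeasureSpace (Fin N) := ⟨μ⟩
    haveI : SigmaFinite (volume : Measure (Fin N)) := (inferInstance : SigmaFinite μ)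
    have hvol : P = (volume : Measure (Fin n → Fin N)) := by
      rw [hP, MeasureTheory.volume_pi]; rfl
    rw [mgf, hvol]
    have : (fun ω : Fin n → Fin N => Real.exp (t * X ω))
        = fun ω => ∏ j : Fin n, Real.exp (t * ((if ω j ∈ A then (1:ℝ) else 0) - p)) := by
      funext ω
      rw [hX, ← Real.exp_sum, Finset.mul_sum]
    rw [this]
    have := MeasureTheory.integral_fintype_prod_eq_pow (ι := Fin n) (μ := (volume : Measure (Fin N)))
      (fun x : Fin N => Real.exp (t * ((if x ∈ A then (1:ℝ) else 0) - p)))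
    rw [Fintype.card_fin] at this
    exact this
  have hmgf_bound : mgf X P t ≤ Real.exp ((n : ℝ) * t ^ 2 / 8) := by
    rw [hmgf]
    calc (∫ x : Fin N, Real.exp (t * ((if x ∈ A then (1:ℝ) else 0) - p)) ∂μ) ^ n
        ≤ (Real.exp (t ^ 2 / 8)) ^ n := pow_le_pow_left₀ hsingle_nonneg hsingle_bound n
      _ = Real.exp ((n : ℝ) * t ^ 2 / 8) := by
          rw [← Real.exp_nat_mul]; ring_nf
  -- Chernoff
  have hcher := measure_ge_le_exp_mul_mgf (μ := P) (X := X) ((n : ℝ) * η / 2) ht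
    (Integrable.of_finite)
  have hfinal : (P {ω | (n : ℝ) * η / 2 ≤ X ω}).toReal
      ≤ Real.exp (-((n : ℝ) * η ^ 2) / 2) := by
    calc (P {ω | (n : ℝ) * η / 2 ≤ X ω}).toReal
        ≤ Real.exp (-t * ((n : ℝ) * η / 2)) * mgf X P t := hcher
      _ ≤ Real.exp (-t * ((n : ℝ) * η / 2)) * Real.exp ((n : ℝ) * t ^ 2 / 8) := by
          exact mul_le_mul_of_nonneg_left hmgf_bound (Real.exp_pos _).le
      _ = Real.exp (-((n : ℝ) * η ^ 2) / 2) := by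
          rw [← Real.exp_add]; congr 1; rw [htdef]; ring
  rw [← ENNReal.ofReal_toReal (measure_ne_top P _)]
  exact ENNReal.ofReal_le_ofReal hfinal

theorem bretagnolle_huber_carol
    (N n : ℕ) (hN : 1 ≤ N) (hn : 1 ≤ n) (η : ℝ) (hη : 0 < η)
    (μ : Measure (Fin N)) [IsProbabilityMeasure μ] :
    (Measure.pi fun _ : Fin n => μ)
        {ω : Fin n → Fin N |
          η ≤ ∑ i : Fin N,
            |((Finset.univ.filter fun j : Fin n => ω j = i).card : ℝ) / (n : ℝ) -
              (μ {i}).toReal|} ≤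
      ENNReal.ofReal ((2 : ℝ) ^ N * Real.exp (-(n * η ^ 2) / 2)) := by
  set P : Measure (Fin n → Fin N) := Measure.pi fun _ : Fin n => μ with hP
  have hn' : (0 : ℝ) < n := by exact_mod_cast hn
  set q : Fin N → ℝ := fun i => (μ {i}).toReal with hq
  -- inclusion into the union over subsets
  have hsub : {ω : Fin n → Fin N |
          η ≤ ∑ i : Fin N,
            |((Finset.univ.filter fun j : Fin n => ω j = i).card : ℝ) / (n : ℝ) - q i|}
      ⊆ ⋃ A : Finset (Fin N),
        {ω : Fin n → Fin N | (n : ℝ) * η / 2 ≤ ∑ j : Fin n,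
          ((if ω j ∈ A then (1 : ℝ) else 0) - ∑ i ∈ A, q i)} := by
    intro ω hω
    simp only [Set.mem_setOf_eq] at hω
    set c : Fin N → ℝ := fun i => ((Finset.univ.filter fun j : Fin n => ω j = i).card : ℝ)
      with hc
    set d : Fin N → ℝ := fun i => c i / (n : ℝ) - q i with hd
    -- total of counts is n
    have hcount : ∑ i : Fin N, c i = (n : ℝ) := by
      rw [hc]
      push_cast [← Nat.cast_sum]
      congr 1
      have := Finset.card_eq_sum_card_fiberwise
        (f := ω) (s := Finset.univ) (t := Finset.univ) (fun x _ => Finset.mem_univ _)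
      simpa [Fintype.card_fin] using this.symm
    have hd0 : ∑ i : Fin N, d i = 0 := by
      rw [hd]
      simp only
      rw [Finset.sum_sub_distrib, ← Finset.sum_div, hcount, sum_singleton_toReal μ]
      field_simp
      ring
    set A : Finset (Fin N) := Finset.univ.filter fun i => q i ≤ c i / (n : ℝ) with hA
    have hsplit := Finset.sum_filter_add_sum_filter_not Finset.univ
      (fun i => q i ≤ c i / (n : ℝ)) d
    have habs : ∑ i : Fin N, |d i| = 2 * ∑ i ∈ A, d i := by
      rw [← Finset.sum_filter_add_sum_filter_not Finset.univ
        (fun i => q i ≤ c i / (n : ℝ)) (fun i => |d i|)]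
      have e1 : ∑ i ∈ Finset.univ.filter (fun i => q i ≤ c i / (n : ℝ)), |d i|
          = ∑ i ∈ A, d i :=
        Finset.sum_congr rfl fun i hi => abs_of_nonneg
          (by rw [hd]; simpa using sub_nonneg.2 (Finset.mem_filter.mp hi).2)
      have e2 : ∑ i ∈ Finset.univ.filter (fun i => ¬ q i ≤ c i / (n : ℝ)), |d i|
          = -∑ i ∈ Finset.univ.filter (fun i => ¬ q i ≤ c i / (n : ℝ)), d i := by
        rw [← Finset.sum_neg_distrib]
        exact Finset.sum_congr rfl fun i hi => abs_of_nonpos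
          (by rw [hd]; simpa using le_of_lt (lt_of_not_ge (Finset.mem_filter.mp hi).2))
      rw [e1, e2]
      rw [hd0] at hsplit
      rw [hA]
      linarith
    have hAineq : η / 2 ≤ ∑ i ∈ A, d i := by
      rw [habs] at hω; linarith
    -- membership in E_A
    refine Set.mem_iUnion.mpr ⟨A, ?_⟩
    simp only [Set.mem_setOf_eq]
    have hcA : ∑ j : Fin n, (if ω j ∈ A then (1 : ℝ) else 0) = ∑ i ∈ A, c i := by
      have : ∀ i, c i = ∑ j : Fin n, (if ω j = i then (1 : ℝ) else 0) := by
        intro i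
        simp only [hc, Finset.card_filter]
        push_cast
        rfl
      simp_rw [this]
      rw [Finset.sum_comm]
      exact Finset.sum_congr rfl fun j _ => by
        rw [Finset.sum_ite_eq A (ω j) (fun _ => (1 : ℝ))]
    rw [Finset.sum_sub_distrib, Finset.sum_const, hcA]
    have hAd : ∑ i ∈ A, d i = (∑ i ∈ A, c i) / (n : ℝ) - ∑ i ∈ A, q i := by
      rw [hd, Finset.sum_sub_distrib, Finset.sum_div]
    rw [hAd] at hAineq
    rw [Finset.card_univ, Fintype.card_fin, nsmul_eq_mul]
    have := mul_le_mul_of_nonneg_left hAineq (le_of_lt hn')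
    rw [mul_sub, mul_div_cancel₀] at this
    · linarith
    · exact hn'.ne'
  -- union bound
  calc P {ω : Fin n → Fin N |
          η ≤ ∑ i : Fin N,
            |((Finset.univ.filter fun j : Fin n => ω j = i).card : ℝ) / (n : ℝ) - q i|}
      ≤ P (⋃ A : Finset (Fin N),
        {ω : Fin n → Fin N | (n : ℝ) * η / 2 ≤ ∑ j : Fin n,
          ((if ω j ∈ A then (1 : ℝ) else 0) - ∑ i ∈ A, q i)}) := measure_mono hsub
    _ ≤ ∑' A : Finset (Fin N), P {ω : Fin n → Fin N | (n : ℝ) * η / 2 ≤ ∑ j : Fin n,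
          ((if ω j ∈ A then (1 : ℝ) else 0) - ∑ i ∈ A, q i)} := measure_iUnion_le _
    _ = ∑ A : Finset (Fin N), P {ω : Fin n → Fin N | (n : ℝ) * η / 2 ≤ ∑ j : Fin n,
          ((if ω j ∈ A then (1 : ℝ) else 0) - ∑ i ∈ A, q i)} := tsum_fintype _
    _ ≤ ∑ A : Finset (Fin N), ENNReal.ofReal (Real.exp (-((n : ℝ) * η ^ 2) / 2)) :=
        Finset.sum_le_sum fun A _ => chernoff_one N n μ A η hη
    _ = (2 ^ N : ℕ) * ENNReal.ofReal (Real.exp (-((n : ℝ) * η ^ 2) / 2)) := by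
        rw [Finset.sum_const, Finset.card_univ, Fintype.card_finset, Fintype.card_fin,
          nsmul_eq_mul]
    _ = ENNReal.ofReal ((2 : ℝ) ^ N * Real.exp (-(n * η ^ 2) / 2)) := by
        rw [ENNReal.ofReal_mul (by positivity)]
        congr 1
        rw [show ((2 : ℝ) ^ N) = ((2 ^ N : ℕ) : ℝ) by push_cast; ring,
          ENNReal.ofReal_natCast]
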